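/- arXiv:math/0006112 — 2 statements merged into one kernel-verified Lean document; each statement's English description precedes it below -/
import Mathlib

section
/- For u = (u₁,u₂) and w = (w₁,w₂) in ℤ², write det(u,w) = u₁w₂ − u₂w₁. If S ⊆ ℤ² is a set such that det(u,w) ∈ {1,−1} for every pair of distinct elements u, w ∈ S, then S has at most 3 elements. -/
/-- `det2 u w = u₁w₂ − u₂w₁`. -/
def det2 (u w : ℤ × ℤ) : ℤ := u.1 * w.2 - u.2 * w.1

lemma det2_odd_aux {u w : ℤ × ℤ} (hd : det2 u w = 1 ∨ det2 u w = -1) :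
    ((u.1 : ZMod 2) * w.2 - u.2 * w.1) ≠ 0 := by
  have : ((det2 u w : ℤ) : ZMod 2) = 1 := by
    rcases hd with hd | hd <;> rw [hd] <;> decide
  rw [det2] at this
  push_cast at this
  rw [this]
  decide

/-- A set of integer vectors, any two distinct members of which form a ℤ-basis of ℤ²,
has at most 3 elements. -/
theorem farey_mutual_basis_card_le_three (S : Set (ℤ × ℤ))
    (h : ∀ u ∈ S, ∀ w ∈ S, u ≠ w → det2 u w = 1 ∨ det2 u w = -1) :
    S.encard ≤ 3 := by
  by_contra hS
  push_neg at hS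
  have h2 : (2 : ℕ∞) ≤ S.encard := le_trans (by norm_num) hS.le
  -- the reduction mod 2
  set f : ℤ × ℤ → ZMod 2 × ZMod 2 := fun p => ((p.1 : ZMod 2), (p.2 : ZMod 2)) with hf
  have hinj : Set.InjOn f S := by
    intro u hu w hw hfe
    by_contra hne
    have hd := h u hu w hw hne
    have h1 : (u.1 : ZMod 2) = w.1 := congrArg Prod.fst hfe
    have h2 : (u.2 : ZMod 2) = w.2 := congrArg Prod.snd hfe
    apply det2_odd_aux hd
    rw [← h1, ← h2]
    ring
  have hnz : ∀ u ∈ S, f u ≠ 0 := by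
    intro u hu h0
    obtain ⟨w, hw, hwne⟩ : ∃ w ∈ S, w ≠ u :=
      Set.exists_ne_of_one_lt_encard (lt_of_lt_of_le (by norm_num) h2) u
    have hd := h u hu w hw (fun e => hwne e.symm)
    have h1 : (u.1 : ZMod 2) = 0 := congrArg Prod.fst h0
    have h2 : (u.2 : ZMod 2) = 0 := congrArg Prod.snd h0
    apply det2_odd_aux hd
    rw [h1, h2]
    ring
  have hsub : f '' S ⊆ ({(0,1), (1,0), (1,1)} : Set (ZMod 2 × ZMod 2)) := by
    rintro v ⟨u, hu, rfl⟩
    have := hnz u hu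
    revert this
    rcases (f u) with ⟨a, b⟩
    fin_cases a <;> fin_cases b <;> decide
  have hcard : ({(0,1), (1,0), (1,1)} : Set (ZMod 2 × ZMod 2)).encard ≤ 3 := by
    apply le_trans (Set.encard_insert_le _ _)
    apply le_trans (add_le_add_left (Set.encard_insert_le _ _) 1)
    rw [Set.encard_singleton]
    norm_num
  have : S.encard ≤ 3 :=
    hinj.encard_image ▸ le_trans (Set.encard_le_encard hsub) hcard
  exact absurd this (not_le.mpr hS)
end

section
/- For u = (u₁,u₂) and w = (w₁,w₂) in ℤ², write det(u,w) = u₁w₂ − u₂w₁, and call v ∈ ℤ² primitive if its two coordinates have greatest common divisor 1. Let w₁, …, w_r be finitely many nonzero vectors in ℤ² (r ≥ 1) and let n₁, …, n_r be positive integers. Then the set of primitive vectors v ∈ ℤ² at which the function v ↦ Σᵢ nᵢ·|det(v, wᵢ)| attains its minimum over all primitive vectors is nonempty and finite. -/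
lemma det2_swap (u v : ℤ × ℤ) : det2 u v = - det2 v u := by
  simp [det2]; ring

lemma parallel_of_det2_eq_zero {v u : ℤ × ℤ} (hv : Int.gcd v.1 v.2 = 1)
    (h : det2 v u = 0) : ∃ c : ℤ, u.1 = c * v.1 ∧ u.2 = c * v.2 := by
  have heq : v.1 * u.2 = v.2 * u.1 := by unfold det2 at h; linarith
  have hco : IsCoprime v.1 v.2 := Int.isCoprime_iff_gcd_eq_one.mpr hv
  rcases eq_or_ne v.1 0 with h1 | h1
  · have hv2 : v.2.natAbs = 1 := by simpa [Int.gcd, h1] using hv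
    have hv2' : v.2 = 1 ∨ v.2 = -1 := Int.natAbs_eq_iff.mp hv2 |>.imp id (by simp)
    have hv2ne : v.2 ≠ 0 := by rcases hv2' with h' | h' <;> simp [h']
    have h2 : v.2 * u.1 = 0 := by rw [← heq, h1]; ring
    have hu1 : u.1 = 0 := by
      rcases mul_eq_zero.mp h2 with h' | h'
      · exact absurd h' hv2ne
      · exact h'
    refine ⟨u.2 * v.2, by rw [hu1, h1]; ring, ?_⟩
    rcases hv2' with h' | h' <;> rw [h'] <;> ring
  · have hdvd : v.1 ∣ u.1 * v.2 := ⟨u.2, by linarith⟩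
    have hd : v.1 ∣ u.1 := hco.dvd_of_dvd_mul_right hdvd
    obtain ⟨c, hc⟩ := hd
    refine ⟨c, by rw [hc]; ring, ?_⟩
    have : v.1 * u.2 = v.1 * (c * v.2) := by rw [heq, hc]; ring
    exact mul_left_cancel₀ h1 this

lemma eq_or_neg_of_det2_eq_zero {v u : ℤ × ℤ} (hv : Int.gcd v.1 v.2 = 1)
    (hu : Int.gcd u.1 u.2 = 1) (h : det2 v u = 0) : u = v ∨ u = -v := by
  obtain ⟨c, hc1, hc2⟩ := parallel_of_det2_eq_zero hv h
  have h' : det2 u v = 0 := by rw [det2_swap, h]; ring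
  obtain ⟨d, hd1, hd2⟩ := parallel_of_det2_eq_zero hu h'
  have hvne : v.1 ≠ 0 ∨ v.2 ≠ 0 := by
    by_contra hcon
    push_neg at hcon
    rw [hcon.1, hcon.2] at hv
    simp [Int.gcd] at hv
  have hdc : d * c = 1 := by
    rcases hvne with h0 | h0
    · have e1 : v.1 = d * (c * v.1) := by rw [← hc1]; exact hd1
      have e2 : d * c * v.1 = 1 * v.1 := by
        rw [one_mul]; conv_rhs => rw [e1]
        ring
      exact mul_right_cancel₀ h0 e2
    · have e1 : v.2 = d * (c * v.2) := by rw [← hc2]; exact hd2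
      have e2 : d * c * v.2 = 1 * v.2 := by
        rw [one_mul]; conv_rhs => rw [e1]
        ring
      exact mul_right_cancel₀ h0 e2
  have hc' : c = 1 ∨ c = -1 := by
    rcases Int.eq_one_or_neg_one_of_mul_eq_one' hdc with ⟨_, h2⟩ | ⟨_, h2⟩
    · exact Or.inl h2
    · exact Or.inr h2
  rcases hc' with h' | h'
  · left; ext <;> simp [hc1, hc2, h']
  · right; ext <;> simp [hc1, hc2, h']

/-- The set C_min of primitive vectors minimizing a positively weighted sum of
geometric intersection numbers |det(v, wᵢ)| with finitely many nonzero vectors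
is nonempty and finite. -/
theorem cmin_nonempty_finite (r : ℕ) (hr : 1 ≤ r) (w : Fin r → ℤ × ℤ)
    (hw : ∀ i, w i ≠ 0) (n : Fin r → ℤ) (hn : ∀ i, 0 < n i) :
    {v : ℤ × ℤ | Int.gcd v.1 v.2 = 1 ∧
      ∀ u : ℤ × ℤ, Int.gcd u.1 u.2 = 1 →
        (∑ i, n i * |det2 v (w i)|) ≤ ∑ i, n i * |det2 u (w i)|}.Nonempty ∧
    {v : ℤ × ℤ | Int.gcd v.1 v.2 = 1 ∧
      ∀ u : ℤ × ℤ, Int.gcd u.1 u.2 = 1 →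
        (∑ i, n i * |det2 v (w i)|) ≤ ∑ i, n i * |det2 u (w i)|}.Finite := by
  classical
  set F : ℤ × ℤ → ℤ := fun v => ∑ i, n i * |det2 v (w i)| with hF
  have hFnn : ∀ v, 0 ≤ F v := by
    intro v
    apply Finset.sum_nonneg
    intro i _
    exact mul_nonneg (hn i).le (abs_nonneg _)
  -- nonemptiness of minimizers via Nat.find
  have hex : ∃ m : ℕ, ∃ v : ℤ × ℤ, Int.gcd v.1 v.2 = 1 ∧ F v = m :=
    ⟨(F (1, 0)).toNat, (1, 0), by simp, (Int.toNat_of_nonneg (hFnn _)).symm⟩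
  obtain ⟨v₀, hv₀prim, hv₀val⟩ := Nat.find_spec hex
  have hv₀min : ∀ u : ℤ × ℤ, Int.gcd u.1 u.2 = 1 → F v₀ ≤ F u := by
    intro u hu
    have h1 : Nat.find hex ≤ (F u).toNat :=
      Nat.find_le ⟨u, hu, (Int.toNat_of_nonneg (hFnn _)).symm⟩
    have h2 : ((Nat.find hex : ℕ) : ℤ) ≤ ((F u).toNat : ℤ) := by exact_mod_cast h1
    rw [Int.toNat_of_nonneg (hFnn _)] at h2
    rw [hv₀val]
    exact h2
  set S := {v : ℤ × ℤ | Int.gcd v.1 v.2 = 1 ∧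
      ∀ u : ℤ × ℤ, Int.gcd u.1 u.2 = 1 → F v ≤ F u} with hS
  have hv₀S : v₀ ∈ S := ⟨hv₀prim, hv₀min⟩
  refine ⟨⟨v₀, hv₀S⟩, ?_⟩
  -- finiteness
  set i0 : Fin r := ⟨0, hr⟩
  have hterm_le : ∀ v (i : Fin r), |det2 v (w i)| ≤ F v := by
    intro v i
    have h1 : n i * |det2 v (w i)| ≤ F v := by
      apply Finset.single_le_sum (f := fun i => n i * |det2 v (w i)|) _ (Finset.mem_univ i)
      intro j _
      exact mul_nonneg (hn j).le (abs_nonneg _)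
    have h2 : |det2 v (w i)| ≤ n i * |det2 v (w i)| :=
      le_mul_of_one_le_left (abs_nonneg _) (hn i)
    linarith
  by_cases hpar : ∀ j, det2 (w i0) (w j) = 0
  · -- all parallel; minimizers ⊆ {d, -d}
    have hne : (w i0).1 ≠ 0 ∨ (w i0).2 ≠ 0 := by
      by_contra hcon
      push_neg at hcon
      exact hw i0 (Prod.ext hcon.1 hcon.2)
    have hgcdpos : 0 < Int.gcd (w i0).1 (w i0).2 := Int.gcd_pos_iff.mpr hne
    set G : ℤ := (Int.gcd (w i0).1 (w i0).2 : ℤ) with hG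
    have hGne : G ≠ 0 := by
      rw [hG]
      exact_mod_cast hgcdpos.ne'
    set d : ℤ × ℤ := ((w i0).1 / G, (w i0).2 / G) with hd
    have hdprim : Int.gcd d.1 d.2 = 1 := Int.gcd_div_gcd_div_gcd hgcdpos
    have hw1 : (w i0).1 = G * d.1 := (Int.mul_ediv_cancel' (Int.gcd_dvd_left _ _)).symm
    have hw2 : (w i0).2 = G * d.2 := (Int.mul_ediv_cancel' (Int.gcd_dvd_right _ _)).symm
    have hddet : ∀ j, det2 d (w j) = 0 := by
      intro j
      have h1 : det2 (w i0) (w j) = G * det2 d (w j) := by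
        show (w i0).1 * (w j).2 - (w i0).2 * (w j).1 = G * (d.1 * (w j).2 - d.2 * (w j).1)
        rw [hw1, hw2]; ring
      have h2 := hpar j
      rw [h1] at h2
      exact (mul_eq_zero.mp h2).resolve_left hGne
    have hFd : F d = 0 := by
      rw [hF]
      apply Finset.sum_eq_zero
      intro j _
      rw [hddet j]
      simp
    apply Set.Finite.subset ((Set.finite_singleton (-d)).insert d)
    intro v hv
    obtain ⟨hvprim, hvmin⟩ := hv
    have hFv0 : F v = 0 := le_antisymm (by rw [← hFd]; exact hvmin d hdprim) (hFnn v)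
    have hvd : det2 v (w i0) = 0 := by
      have h1 := hterm_le v i0
      rw [hFv0] at h1
      exact abs_eq_zero.mp (le_antisymm h1 (abs_nonneg _))
    have hvdd : det2 d v = 0 := by
      have h1 : det2 v (w i0) = G * det2 v d := by
        show v.1 * (w i0).2 - v.2 * (w i0).1 = G * (v.1 * d.2 - v.2 * d.1)
        rw [hw1, hw2]; ring
      rw [h1] at hvd
      have h2 : det2 v d = 0 := (mul_eq_zero.mp hvd).resolve_left hGne
      rw [det2_swap, h2, neg_zero]
    exact eq_or_neg_of_det2_eq_zero hdprim hvprim hvdd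
  · push_neg at hpar
    obtain ⟨j, hDj⟩ := hpar
    set M : ℤ := F v₀ with hM
    have hMnn : 0 ≤ M := hFnn v₀
    set D : ℤ := det2 (w i0) (w j) with hDdef
    have hDabs : 1 ≤ |D| := Int.one_le_abs hDj
    set K : ℤ := M * (|(w i0).1| + |(w i0).2| + |(w j).1| + |(w j).2|) with hK
    apply Set.Finite.subset (Set.finite_Icc ((-K, -K) : ℤ × ℤ) (K, K))
    intro v hv
    obtain ⟨hvprim, hvmin⟩ := hv
    have hFvM : F v ≤ M := hvmin v₀ hv₀prim
    have ha : |det2 v (w i0)| ≤ M := le_trans (hterm_le v i0) hFvM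
    have hb : |det2 v (w j)| ≤ M := le_trans (hterm_le v j) hFvM
    set a : ℤ := det2 v (w i0) with haa
    set b : ℤ := det2 v (w j) with hab
    have hid1 : v.1 * D = b * (w i0).1 - a * (w j).1 := by
      simp only [haa, hab, hDdef, det2]; ring
    have hid2 : v.2 * D = b * (w i0).2 - a * (w j).2 := by
      simp only [haa, hab, hDdef, det2]; ring
    have hb1 : |v.1| ≤ K := by
      have h1 : |v.1| ≤ |v.1| * |D| := le_mul_of_one_le_right (abs_nonneg _) hDabs
      have h2 : |v.1| * |D| = |b * (w i0).1 - a * (w j).1| := by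
        rw [← abs_mul, hid1]
      have h3 : |b * (w i0).1 - a * (w j).1| ≤ |b| * |(w i0).1| + |a| * |(w j).1| := by
        calc |b * (w i0).1 - a * (w j).1| ≤ |b * (w i0).1| + |a * (w j).1| := abs_sub _ _
        _ = |b| * |(w i0).1| + |a| * |(w j).1| := by rw [abs_mul, abs_mul]
      have h4 : |b| * |(w i0).1| + |a| * |(w j).1| ≤ K := by
        simp only [hK]
        nlinarith [abs_nonneg (w i0).1, abs_nonneg (w i0).2, abs_nonneg (w j).1,
          abs_nonneg (w j).2, abs_nonneg a, abs_nonneg b]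
      linarith
    have hb2 : |v.2| ≤ K := by
      have h1 : |v.2| ≤ |v.2| * |D| := le_mul_of_one_le_right (abs_nonneg _) hDabs
      have h2 : |v.2| * |D| = |b * (w i0).2 - a * (w j).2| := by
        rw [← abs_mul, hid2]
      have h3 : |b * (w i0).2 - a * (w j).2| ≤ |b| * |(w i0).2| + |a| * |(w j).2| := by
        calc |b * (w i0).2 - a * (w j).2| ≤ |b * (w i0).2| + |a * (w j).2| := abs_sub _ _
        _ = |b| * |(w i0).2| + |a| * |(w j).2| := by rw [abs_mul, abs_mul]
      have h4 : |b| * |(w i0).2| + |a| * |(w j).2| ≤ K := by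
        simp only [hK]
        nlinarith [abs_nonneg (w i0).1, abs_nonneg (w i0).2, abs_nonneg (w j).1,
          abs_nonneg (w j).2, abs_nonneg a, abs_nonneg b]
      linarith
    constructor
    · exact ⟨by simpa using (abs_le.mp hb1).1, by simpa using (abs_le.mp hb2).1⟩
    · exact ⟨(abs_le.mp hb1).2, (abs_le.mp hb2).2⟩
end
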